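/- Let C be a finite-dimensional Λ-vector space with generators x_1,…,x_n having actions A(x_i) that are pairwise distinct modulo a subgroup Γ ⊂ ℝ containing all exponents of Λ^Γ. For a nonzero ξ ∈ C write ξ = f T^a x + (lower action terms) with f ≠ 0; then the leading action term T^a x is unique. Moreover, a finite set of nonzero vectors ξ_1,…,ξ_m is orthogonal if and only if their leading generators x (the basis elements appearing in the leading action terms) are pairwise distinct. -/

import Mathlib

open Finset Classical
noncomputable section

/-- The Novikov valuation `ν(λ) = min{a_j : f_j ≠ 0}`. -/
noncomputable def nu {F : Type*} [Field F] (l : HahnSeries ℝ F) : ℝ := l.order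

/-- A series lies in `Λ^Γ` iff all its exponents lie in the subgroup `Γ ⊂ ℝ`. -/
def InGamma {F : Type*} [Field F] (Γ : AddSubgroup ℝ) (l : HahnSeries ℝ F) : Prop :=
  l.support ⊆ (Γ : Set ℝ)

/-- The action `A(∑ λᵢ xᵢ) = maxᵢ (A(xᵢ) − ν(λᵢ))` on `C = ⊕ᵢ Λ xᵢ`. -/
noncomputable def act {F : Type*} [Field F] {ι : Type*} [Fintype ι]
    (Ax : ι → ℝ) (c : ι → HahnSeries ℝ F) : WithBot ℝ :=
  Finset.univ.sup fun i => if c i = 0 then (⊥ : WithBot ℝ) else ((Ax i - nu (c i) : ℝ) : WithBot ℝ)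

/-- `A(λ x) = A(x) − ν(λ)` for `λ ≠ 0`, extended by `A(0) = ⊥`. -/
noncomputable def scaledAct {F : Type*} [Field F] {ι : Type*} [Fintype ι]
    (Ax : ι → ℝ) (l : HahnSeries ℝ F) (v : ι → HahnSeries ℝ F) : WithBot ℝ :=
  if l = 0 then ⊥ else WithBot.map (fun t => t - nu l) (act Ax v)

/-- `i` is the generator of the leading action term `f T^{ν(ξᵢ)} xᵢ` of `ξ`:
`ξᵢ ≠ 0` and `A(ξ) = A(xᵢ) − ν(ξᵢ)`. -/
def IsLeadIdx {F : Type*} [Field F] {ι : Type*} [Fintype ι]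
    (Ax : ι → ℝ) (ξ : ι → HahnSeries ℝ F) (i : ι) : Prop :=
  ξ i ≠ 0 ∧ act Ax ξ = ((Ax i - nu (ξ i) : ℝ) : WithBot ℝ)

/-- Orthogonality over `Λ^Γ`: `A(∑ λᵢ ξᵢ) = maxᵢ (A(ξᵢ) − ν(λᵢ))` for all coefficients
`λᵢ ∈ Λ^Γ`. -/
def OrthogonalGamma {F : Type*} [Field F] {ι : Type*} [Fintype ι] {κ : Type*} [Fintype κ]
    (Γ : AddSubgroup ℝ) (Ax : ι → ℝ) (ξ : κ → ι → HahnSeries ℝ F) : Prop :=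
  ∀ l : κ → HahnSeries ℝ F, (∀ j, InGamma Γ (l j)) →
    act Ax (∑ j, l j • ξ j) = Finset.univ.sup fun j => scaledAct Ax (l j) (ξ j)

section Helpers
variable {F : Type*} [Field F] {ι : Type*} [Fintype ι]

lemma nu_mem {Γ : AddSubgroup ℝ} {x : HahnSeries ℝ F} (hx : x ≠ 0) (h : InGamma Γ x) :
    nu x ∈ Γ :=
  h ((HahnSeries.mem_support x x.order).2 (HahnSeries.coeff_order_eq_zero.not.mpr hx))

lemma le_act {Ax : ι → ℝ} {ξ : ι → HahnSeries ℝ F} {i : ι} (h : ξ i ≠ 0) :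
    ((Ax i - nu (ξ i) : ℝ) : WithBot ℝ) ≤ act Ax ξ := by
  have := Finset.le_sup (f := fun i => if ξ i = 0 then (⊥ : WithBot ℝ)
    else ((Ax i - nu (ξ i) : ℝ) : WithBot ℝ)) (Finset.mem_univ i)
  simpa [act, if_neg h] using this

lemma exists_lead {Ax : ι → ℝ} {ξ : ι → HahnSeries ℝ F} {i₀ : ι} (h : ξ i₀ ≠ 0) :
    ∃ i, IsLeadIdx Ax ξ i := by
  obtain ⟨b, -, hb⟩ := Finset.exists_mem_eq_sup Finset.univ ⟨i₀, Finset.mem_univ i₀⟩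
    (fun i => if ξ i = 0 then (⊥ : WithBot ℝ) else ((Ax i - nu (ξ i) : ℝ) : WithBot ℝ))
  by_cases hbz : ξ b = 0
  · exfalso
    have h1 : act Ax ξ = ⊥ := by rw [act, hb, if_pos hbz]
    have h2 := le_act (Ax := Ax) h
    rw [h1] at h2
    exact (WithBot.coe_ne_bot) (le_bot_iff.mp h2)
  · exact ⟨b, hbz, by rw [act, hb, if_neg hbz]⟩

lemma lead_unique {Γ : AddSubgroup ℝ} {Ax : ι → ℝ}
    (hdist : ∀ i j : ι, i ≠ j → Ax i - Ax j ∉ Γ)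
    {ξ : ι → HahnSeries ℝ F} (hΓ : ∀ i, InGamma Γ (ξ i)) {i j : ι}
    (hi : IsLeadIdx Ax ξ i) (hj : IsLeadIdx Ax ξ j) : i = j := by
  by_contra hne
  have heq : Ax i - nu (ξ i) = Ax j - nu (ξ j) := by
    have := hi.2.symm.trans hj.2
    exact_mod_cast this
  refine hdist i j hne ?_
  have hmem := sub_mem (nu_mem hi.1 (hΓ i)) (nu_mem hj.1 (hΓ j))
  have e : Ax i - Ax j = nu (ξ i) - nu (ξ j) := by linarith
  rwa [e]

lemma lt_of_not_lead {Γ : AddSubgroup ℝ} {Ax : ι → ℝ}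
    (hdist : ∀ i j : ι, i ≠ j → Ax i - Ax j ∉ Γ)
    {ξ : ι → HahnSeries ℝ F} (hΓ : ∀ i, InGamma Γ (ξ i))
    {i0 i : ι} (h0 : IsLeadIdx Ax ξ i0) (hne : i ≠ i0) (hi : ξ i ≠ 0) :
    Ax i - nu (ξ i) < Ax i0 - nu (ξ i0) := by
  have hle : Ax i - nu (ξ i) ≤ Ax i0 - nu (ξ i0) := by
    have h := le_act (Ax := Ax) hi
    rw [h0.2] at h
    exact_mod_cast h
  rcases hle.lt_or_eq with h | h
  · exact h
  · exact absurd (lead_unique hdist hΓ ⟨hi, by rw [h0.2, h]⟩ h0) hne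

lemma lt_order_of_forall {x : HahnSeries ℝ F} {c : ℝ}
    (hx : x ≠ 0) (h : ∀ t ≤ c, x.coeff t = 0) : c < x.order := by
  by_contra hc
  exact HahnSeries.coeff_order_eq_zero.not.mpr hx (h _ (not_lt.mp hc))

lemma coeff_sum' {κ : Type*} (s : Finset κ) (f : κ → HahnSeries ℝ F) (t : ℝ) :
    (∑ j ∈ s, f j).coeff t = ∑ j ∈ s, (f j).coeff t :=
  map_sum (HahnSeries.coeff.addMonoidHom t) f s

lemma ortho_of_inj {Γ : AddSubgroup ℝ} {Ax : ι → ℝ} {m : ℕ}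
    (hdist : ∀ i j : ι, i ≠ j → Ax i - Ax j ∉ Γ)
    {ξ : Fin m → ι → HahnSeries ℝ F}
    (hΓ : ∀ j i, InGamma Γ (ξ j i))
    {lead : Fin m → ι} (hinj : Function.Injective lead)
    (hlead : ∀ j, IsLeadIdx Ax (ξ j) (lead j)) :
    OrthogonalGamma Γ Ax ξ := by
  intro l hl
  set r : Fin m → ℝ := fun j => Ax (lead j) - nu (ξ j (lead j)) with hr
  have hsc : ∀ j, scaledAct Ax (l j) (ξ j)
      = if l j = 0 then ⊥ else ((r j - nu (l j) : ℝ) : WithBot ℝ) := by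
    intro j
    by_cases h : l j = 0
    · simp [scaledAct, h]
    · simp [scaledAct, h, (hlead j).2, WithBot.map_coe, hr]
  by_cases hall : ∀ j, l j = 0
  · have hz : (∑ j, l j • ξ j) = 0 := by
      refine Finset.sum_eq_zero fun j _ => ?_
      rw [hall j]; exact zero_smul (HahnSeries ℝ F) (ξ j)
    rw [hz]
    have lhs0 : act Ax (0 : ι → HahnSeries ℝ F) = ⊥ := by
      rw [act, Finset.sup_eq_bot_iff]; intro i _; simp
    rw [lhs0]
    symm
    rw [Finset.sup_eq_bot_iff]
    intro j _
    rw [hsc j, if_pos (hall j)]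
  · push_neg at hall
    obtain ⟨jw, hjw⟩ := hall
    have hne : (Finset.univ.filter fun j => l j ≠ 0).Nonempty :=
      ⟨jw, Finset.mem_filter.mpr ⟨Finset.mem_univ jw, hjw⟩⟩
    obtain ⟨j0, hj0mem, hj0max⟩ :=
      Finset.exists_max_image (Finset.univ.filter fun j => l j ≠ 0)
        (fun j => r j - nu (l j)) hne
    have hlj0 : l j0 ≠ 0 := (Finset.mem_filter.mp hj0mem).2
    set s0 : ℝ := r j0 - nu (l j0) with hs0
    -- RHS = s0
    have hrhs : (Finset.univ.sup fun j => scaledAct Ax (l j) (ξ j)) = (s0 : WithBot ℝ) := by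
      apply le_antisymm
      · apply Finset.sup_le
        intro j _
        rw [hsc j]
        by_cases h : l j = 0
        · rw [if_pos h]; exact bot_le
        · rw [if_neg h]
          exact_mod_cast hj0max j (Finset.mem_filter.mpr ⟨Finset.mem_univ j, h⟩)
      · calc (s0 : WithBot ℝ) = scaledAct Ax (l j0) (ξ j0) := by rw [hsc j0, if_neg hlj0]
          _ ≤ _ := Finset.le_sup (f := fun j => scaledAct Ax (l j) (ξ j)) (Finset.mem_univ j0)
    rw [hrhs]
    -- key coordinate
    set i0 : ι := lead j0 with hi0
    set t0 : ℝ := nu (l j0) + nu (ξ j0 i0) with ht0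
    have ht0s : Ax i0 - t0 = s0 := by rw [ht0, hs0, hr]; ring
    -- compute the coefficient of the sum at coordinate i0, exponent t0
    have hcoord : ∀ i : ι, (∑ j, l j • ξ j) i = ∑ j, l j * ξ j i := by
      intro i
      simp [Finset.sum_apply]
    have hcoeff : ((∑ j, l j • ξ j) i0).coeff t0 = (l j0 * ξ j0 i0).coeff t0 := by
      rw [hcoord i0, coeff_sum']
      apply Finset.sum_eq_single
      · intro j _ hjne
        by_cases hlj : l j = 0
        · simp [hlj]
        by_cases hxj : ξ j i0 = 0
        · simp [hxj]
        have hord : (l j * ξ j i0).order = nu (l j) + nu (ξ j i0) :=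
          HahnSeries.order_mul hlj hxj
        have hstrict : Ax i0 - nu (ξ j i0) < r j := by
          have : i0 ≠ lead j := fun h => hjne (hinj (hi0 ▸ h.symm))
          exact lt_of_not_lead hdist (hΓ j) (hlead j) this hxj
        have hmax : r j - nu (l j) ≤ s0 :=
          hj0max j (Finset.mem_filter.mpr ⟨Finset.mem_univ j, hlj⟩)
        have : t0 < (l j * ξ j i0).order := by
          rw [hord]
          have : Ax i0 - s0 = t0 := by linarith [ht0s]
          nlinarith [hstrict, hmax]
        exact HahnSeries.coeff_eq_zero_of_lt_order this
      · intro h; exact absurd (Finset.mem_univ j0) h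
    have hj0ne : (l j0 * ξ j0 i0) ≠ 0 := mul_ne_zero hlj0 (hlead j0).1
    have hordj0 : (l j0 * ξ j0 i0).order = t0 :=
      HahnSeries.order_mul hlj0 (hlead j0).1
    have hc0 : ((∑ j, l j • ξ j) i0).coeff t0 ≠ 0 := by
      rw [hcoeff, ← hordj0]
      exact HahnSeries.coeff_order_eq_zero.not.mpr hj0ne
    have hSne : (∑ j, l j • ξ j) i0 ≠ 0 := HahnSeries.ne_zero_of_coeff_ne_zero hc0
    have hole : ((∑ j, l j • ξ j) i0).order ≤ t0 := HahnSeries.order_le_of_coeff_ne_zero hc0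
    -- LHS ≥ s0
    have hge : (s0 : WithBot ℝ) ≤ act Ax (∑ j, l j • ξ j) := by
      refine le_trans ?_ (le_act (Ax := Ax) hSne)
      apply WithBot.coe_le_coe.mpr
      have : nu ((∑ j, l j • ξ j) i0) ≤ t0 := hole
      linarith [ht0s]
    -- LHS ≤ s0
    have hle : act Ax (∑ j, l j • ξ j) ≤ (s0 : WithBot ℝ) := by
      rw [act]
      apply Finset.sup_le
      intro i _
      by_cases hSi : (∑ j, l j • ξ j) i = 0
      · rw [if_pos hSi]; exact bot_le
      rw [if_neg hSi]
      apply WithBot.coe_le_coe.mpr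
      have hcne : ((∑ j, l j • ξ j) i).coeff (((∑ j, l j • ξ j) i).order) ≠ 0 :=
        HahnSeries.coeff_order_eq_zero.not.mpr hSi
      set o : ℝ := ((∑ j, l j • ξ j) i).order with ho
      rw [hcoord i, coeff_sum'] at hcne
      obtain ⟨j, -, hj⟩ := Finset.exists_ne_zero_of_sum_ne_zero hcne
      have hprodne : l j * ξ j i ≠ 0 := HahnSeries.ne_zero_of_coeff_ne_zero hj
      have hlj : l j ≠ 0 := left_ne_zero_of_mul hprodne
      have hxj : ξ j i ≠ 0 := right_ne_zero_of_mul hprodne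
      have h1 : nu (l j) + nu (ξ j i) ≤ o := by
        have := HahnSeries.order_le_of_coeff_ne_zero hj
        rwa [HahnSeries.order_mul hlj hxj] at this
      have h2 : Ax i - nu (ξ j i) ≤ r j := by
        have h := le_act (Ax := Ax) hxj
        rw [(hlead j).2] at h
        exact_mod_cast h
      have h3 : r j - nu (l j) ≤ s0 :=
        hj0max j (Finset.mem_filter.mpr ⟨Finset.mem_univ j, hlj⟩)
      have : nu ((∑ j, l j • ξ j) i) = o := ho ▸ rfl
      linarith
    exact le_antisymm hle hge


lemma not_ortho {Γ : AddSubgroup ℝ} {Ax : ι → ℝ} {m : ℕ}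
    (hdist : ∀ i j : ι, i ≠ j → Ax i - Ax j ∉ Γ)
    {ξ : Fin m → ι → HahnSeries ℝ F}
    (hΓ : ∀ j i, InGamma Γ (ξ j i))
    {j1 j2 : Fin m} (hj : j1 ≠ j2) {i0 : ι}
    (h1 : IsLeadIdx Ax (ξ j1) i0) (h2 : IsLeadIdx Ax (ξ j2) i0) :
    ¬ OrthogonalGamma Γ Ax ξ := by
  intro hort
  set a : F := (ξ j1 i0).coeff (ξ j1 i0).order with ha'
  set b : F := (ξ j2 i0).coeff (ξ j2 i0).order with hb'
  have ha : a ≠ 0 := HahnSeries.coeff_order_eq_zero.not.mpr h1.1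
  have hb : b ≠ 0 := HahnSeries.coeff_order_eq_zero.not.mpr h2.1
  set c : F := -(a / b) with hc'
  have hc : c ≠ 0 := neg_ne_zero.mpr (div_ne_zero ha hb)
  set d : ℝ := nu (ξ j1 i0) - nu (ξ j2 i0) with hd'
  set l : Fin m → HahnSeries ℝ F := fun j =>
    if j = j1 then 1 else if j = j2 then HahnSeries.single d c else 0 with hl'
  have hlj1 : l j1 = 1 := by simp [hl']
  have hlj2 : l j2 = HahnSeries.single d c := by simp [hl', hj.symm]
  have hlo : ∀ j, j ≠ j1 → j ≠ j2 → l j = 0 := by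
    intro j hne1 hne2; simp [hl', hne1, hne2]
  have hdΓ : d ∈ Γ := by
    rw [hd']; exact sub_mem (nu_mem h1.1 (hΓ j1 i0)) (nu_mem h2.1 (hΓ j2 i0))
  have hl : ∀ j, InGamma Γ (l j) := by
    intro j
    by_cases e1 : j = j1
    · subst e1; rw [hlj1]
      intro t ht
      rw [HahnSeries.support_one, Set.mem_singleton_iff] at ht
      rw [ht]; exact zero_mem Γ
    by_cases e2 : j = j2
    · subst e2; rw [hlj2]
      intro t ht
      have := HahnSeries.support_single_subset ht
      simp only [Set.mem_singleton_iff] at this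
      rw [this]; exact hdΓ
    · rw [hlo j e1 e2]
      intro t ht
      simp [HahnSeries.support_zero] at ht
  set r : ℝ := Ax i0 - nu (ξ j1 i0) with hr'
  -- the sum
  have hsum : ∀ i : ι, (∑ j, l j • ξ j) i
      = ξ j1 i + HahnSeries.single d c * ξ j2 i := by
    intro i
    have : (∑ j, l j • ξ j) = l j1 • ξ j1 + l j2 • ξ j2 := by
      calc ∑ j, l j • ξ j = ∑ j ∈ ({j1, j2} : Finset (Fin m)), l j • ξ j := by
            symm
            apply Finset.sum_subset (Finset.subset_univ _)
            intro x _ hx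
            simp only [Finset.mem_insert, Finset.mem_singleton, not_or] at hx
            rw [hlo x hx.1 hx.2]
            exact zero_smul (HahnSeries ℝ F) (ξ x)
        _ = l j1 • ξ j1 + l j2 • ξ j2 := Finset.sum_pair hj
    rw [this]
    simp [hlj1, hlj2]
  -- the order relation for the product piece
  have hordprod : ∀ i : ι, ξ j2 i ≠ 0 →
      (HahnSeries.single d c * ξ j2 i).order = d + nu (ξ j2 i) := by
    intro i hxi
    rw [HahnSeries.order_mul (HahnSeries.single_ne_zero hc) hxi,
      HahnSeries.order_single hc]
    rfl
  -- RHS = r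
  have hrhs : (Finset.univ.sup fun j => scaledAct Ax (l j) (ξ j)) = (r : WithBot ℝ) := by
    have hs1 : scaledAct Ax (l j1) (ξ j1) = (r : WithBot ℝ) := by
      rw [hlj1, scaledAct, if_neg one_ne_zero, h1.2]
      show WithBot.map _ _ = _
      rw [WithBot.map_coe]
      norm_num [nu, HahnSeries.order_one, hr']
    have hs2 : scaledAct Ax (l j2) (ξ j2) = (r : WithBot ℝ) := by
      rw [hlj2, scaledAct, if_neg (HahnSeries.single_ne_zero hc), h2.2]
      show WithBot.map _ _ = _
      rw [WithBot.map_coe]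
      have : nu (HahnSeries.single d c) = d := HahnSeries.order_single hc
      rw [this]
      norm_num [hd', hr']
    apply le_antisymm
    · apply Finset.sup_le
      intro j _
      by_cases e1 : j = j1
      · subst e1; rw [hs1]
      by_cases e2 : j = j2
      · subst e2; rw [hs2]
      · rw [hlo j e1 e2, scaledAct, if_pos rfl]; exact bot_le
    · calc (r : WithBot ℝ) = scaledAct Ax (l j1) (ξ j1) := hs1.symm
        _ ≤ _ := Finset.le_sup (f := fun j => scaledAct Ax (l j) (ξ j)) (Finset.mem_univ j1)
  -- LHS < r on every coordinate
  have hlt : act Ax (∑ j, l j • ξ j) < (r : WithBot ℝ) := by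
    rw [act]
    rw [Finset.sup_lt_iff (by exact WithBot.bot_lt_coe r)]
    intro i _
    by_cases hSi : (∑ j, l j • ξ j) i = 0
    · rw [if_pos hSi]; exact WithBot.bot_lt_coe r
    rw [if_neg hSi]
    rw [WithBot.coe_lt_coe]
    rw [hsum i] at hSi ⊢
    have key : Ax i - r < (ξ j1 i + HahnSeries.single d c * ξ j2 i).order := by
      apply lt_order_of_forall hSi
      intro t ht
      rw [HahnSeries.coeff_add]
      by_cases hi : i = i0
      · rw [hi] at ht ⊢
        rcases lt_or_eq_of_le ht with hlt' | heq
        · have e1 : (ξ j1 i0).coeff t = 0 := by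
            apply HahnSeries.coeff_eq_zero_of_lt_order
            show t < nu (ξ j1 i0)
            rw [hr'] at hlt'; linarith
          have e2 : (HahnSeries.single d c * ξ j2 i0).coeff t = 0 := by
            apply HahnSeries.coeff_eq_zero_of_lt_order
            rw [hordprod i0 h2.1, hd']
            rw [hr'] at hlt'; linarith
          rw [e1, e2, add_zero]
        · have ht0 : t = nu (ξ j1 i0) := by rw [hr'] at heq; linarith
          have e1 : (ξ j1 i0).coeff t = a := by rw [ht0]; rfl
          have e2 : (HahnSeries.single d c * ξ j2 i0).coeff t = c * b := by
            have ht1 : t = nu (ξ j2 i0) + d := by rw [ht0, hd']; ring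
            rw [ht1]
            exact HahnSeries.coeff_single_mul_add
          rw [e1, e2, hc']
          field_simp
          ring
      · -- i ≠ i0
        have e1 : (ξ j1 i).coeff t = 0 := by
          by_cases hx : ξ j1 i = 0
          · rw [hx]; rfl
          · apply HahnSeries.coeff_eq_zero_of_lt_order
            show t < nu (ξ j1 i)
            have hlt2 := lt_of_not_lead hdist (hΓ j1) h1 hi hx
            rw [hr'] at ht
            linarith
        have e2 : (HahnSeries.single d c * ξ j2 i).coeff t = 0 := by
          by_cases hx : ξ j2 i = 0
          · rw [hx, mul_zero]; rfl
          · apply HahnSeries.coeff_eq_zero_of_lt_order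
            rw [hordprod i hx, hd']
            have hlt2 := lt_of_not_lead hdist (hΓ j2) h2 hi hx
            rw [hr'] at ht
            linarith
        rw [e1, e2, add_zero]
    have hnu : nu (ξ j1 i + HahnSeries.single d c * ξ j2 i)
        = (ξ j1 i + HahnSeries.single d c * ξ j2 i).order := rfl
    rw [hnu]; linarith
  rw [hort l hl, hrhs] at hlt
  exact lt_irrefl _ hlt

end Helpers

/-- If the actions `A(xᵢ)` of the generators are pairwise distinct modulo `Γ`, then every
nonzero `ξ ∈ C` with coefficients in `Λ^Γ` has a unique leading action term; and a finite
family of such nonzero vectors is orthogonal if and only if their leading generators are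
pairwise distinct. -/
theorem leading_term_unique_and_orthogonal_iff
    {F : Type*} [Field F] {ι : Type*} [Fintype ι] {m : ℕ}
    (Γ : AddSubgroup ℝ) (Ax : ι → ℝ)
    (hdist : ∀ i j : ι, i ≠ j → Ax i - Ax j ∉ Γ) :
    (∀ ξ : ι → HahnSeries ℝ F, ξ ≠ 0 → (∀ i, InGamma Γ (ξ i)) →
        ∃! i : ι, IsLeadIdx Ax ξ i) ∧
    (∀ ξ : Fin m → ι → HahnSeries ℝ F, (∀ j, ξ j ≠ 0) →
        (∀ j i, InGamma Γ (ξ j i)) →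
        (OrthogonalGamma Γ Ax ξ ↔
          ∃ lead : Fin m → ι, Function.Injective lead ∧
            ∀ j, IsLeadIdx Ax (ξ j) (lead j))) := by
  constructor
  · intro ξ hξ hΓ
    obtain ⟨i0, hi0⟩ := Function.ne_iff.mp hξ
    obtain ⟨i, hi⟩ := exists_lead (Ax := Ax) hi0
    exact ⟨i, hi, fun j hj => lead_unique hdist hΓ hj hi⟩
  · intro ξ hξ hΓ
    constructor
    · intro hort
      have hex : ∀ j, ∃ i, IsLeadIdx Ax (ξ j) i := fun j => by
        obtain ⟨i0, hi0⟩ := Function.ne_iff.mp (hξ j)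
        exact exists_lead hi0
      choose lead hlead using hex
      refine ⟨lead, ?_, hlead⟩
      intro j1 j2 h
      by_contra hne
      exact not_ortho hdist hΓ hne (hlead j1) (by rw [h]; exact hlead j2) hort
    · rintro ⟨lead, hinj, hlead⟩
      exact ortho_of_inj hdist hΓ hinj hlead

end
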